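/- Let W be an n×n symmetric positive definite matrix with W = σ̄² I, K an d×n real matrix with ‖K‖ ≤ κ where κ ≥ 1, and σ_ν² = 2κ²σ̄². Then the (n+d)×(n+d) block matrix M = [[σ̄² I, σ̄² Kᵀ], [σ̄² K, σ̄² K Kᵀ + σ_ν² I]] satisfies M ≽ (σ̄²/2) I. -/

import Mathlib

open Matrix
open scoped Matrix.Norms.L2Operator

lemma aux_norm_sq {k : ℕ} (y : Fin k → ℝ) :
    ‖((EuclideanSpace.equiv (Fin k) ℝ).symm y : EuclideanSpace ℝ (Fin k))‖ ^ 2 = y ⬝ᵥ y := by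
  rw [EuclideanSpace.norm_eq, Real.sq_sqrt (by positivity)]
  simp [dotProduct, sq]

lemma aux_dot_le {d n : ℕ} (K : Matrix (Fin d) (Fin n) ℝ) (κ : ℝ)
    (hK : ‖K‖ ≤ κ) (v : Fin d → ℝ) :
    (Kᵀ *ᵥ v) ⬝ᵥ (Kᵀ *ᵥ v) ≤ κ ^ 2 * (v ⬝ᵥ v) := by
  have hKT : ‖Kᵀ‖ ≤ κ := by
    have : Kᵀ = Kᴴ := by ext i j; simp [Matrix.conjTranspose_apply]
    rw [this, Matrix.l2_opNorm_conjTranspose]; exact hK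
  have h := Kᵀ.l2_opNorm_mulVec ((EuclideanSpace.equiv (Fin d) ℝ).symm v)
  have heq : Kᵀ *ᵥ ((EuclideanSpace.equiv (Fin d) ℝ).symm v) = Kᵀ *ᵥ v := rfl
  rw [heq] at h
  have h1 := aux_norm_sq (Kᵀ *ᵥ v)
  have h2 := aux_norm_sq v
  have hv : (0:ℝ) ≤ ‖((EuclideanSpace.equiv (Fin d) ℝ).symm v : EuclideanSpace ℝ (Fin d))‖ :=
    norm_nonneg _
  have h' : ‖((EuclideanSpace.equiv (Fin n) ℝ).symm (Kᵀ *ᵥ v) : EuclideanSpace ℝ (Fin n))‖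
      ≤ κ * ‖((EuclideanSpace.equiv (Fin d) ℝ).symm v : EuclideanSpace ℝ (Fin d))‖ :=
    h.trans (mul_le_mul_of_nonneg_right hKT hv)
  have hsq := pow_le_pow_left₀ (norm_nonneg _) h' 2
  rw [h1, mul_pow] at hsq
  rw [← h2]
  linarith [hsq]

lemma aux_self_nonneg {k : ℕ} (y : Fin k → ℝ) : 0 ≤ y ⬝ᵥ y :=
  Finset.sum_nonneg fun i _ => mul_self_nonneg (y i)

theorem stmt_16 {n d : ℕ} (K : Matrix (Fin d) (Fin n) ℝ)
    (κ σ2 : ℝ) (hκ : 1 ≤ κ) (hσ2 : 0 < σ2) (hK : ‖K‖ ≤ κ) :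
    (Matrix.fromBlocks
        (σ2 • (1 : Matrix (Fin n) (Fin n) ℝ)) (σ2 • Kᵀ)
        (σ2 • K) (σ2 • (K * Kᵀ) + (2 * κ ^ 2 * σ2) • (1 : Matrix (Fin d) (Fin d) ℝ)) -
      (σ2 / 2) • (1 : Matrix (Fin n ⊕ Fin d) (Fin n ⊕ Fin d) ℝ)).PosSemidef := by
  rw [Matrix.posSemidef_iff_dotProduct_mulVec]
  constructor
  · show _ = _
    ext i j
    cases i <;> cases j <;>
      simp [Matrix.conjTranspose_apply, Matrix.one_apply, Matrix.mul_apply,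
        mul_comm, eq_comm]
  · intro x
    set u : Fin n → ℝ := x ∘ Sum.inl with hu
    set v : Fin d → ℝ := x ∘ Sum.inr with hv
    set w : Fin n → ℝ := Kᵀ *ᵥ v with hw
    have hx : x = Sum.elim u v := by ext i; cases i <;> rfl
    have key : star x ⬝ᵥ (Matrix.fromBlocks
        (σ2 • (1 : Matrix (Fin n) (Fin n) ℝ)) (σ2 • Kᵀ)
        (σ2 • K) (σ2 • (K * Kᵀ) + (2 * κ ^ 2 * σ2) • (1 : Matrix (Fin d) (Fin d) ℝ)) -
        (σ2 / 2) • (1 : Matrix (Fin n ⊕ Fin d) (Fin n ⊕ Fin d) ℝ)) *ᵥ x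
        = σ2 / 2 * (u ⬝ᵥ u) + 2 * σ2 * (u ⬝ᵥ w) + σ2 * (w ⬝ᵥ w)
          + (2 * κ ^ 2 * σ2 - σ2 / 2) * (v ⬝ᵥ v) := by
      rw [show (star x : Fin n ⊕ Fin d → ℝ) = x from rfl, hx]
      rw [Matrix.sub_mulVec, Matrix.fromBlocks_mulVec]
      have hvKu : v ⬝ᵥ (K *ᵥ u) = w ⬝ᵥ u := by
        rw [Matrix.dotProduct_mulVec, ← Matrix.mulVec_transpose]
      have hvKKv : v ⬝ᵥ ((K * Kᵀ) *ᵥ v) = w ⬝ᵥ w := by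
        rw [← Matrix.mulVec_mulVec, Matrix.dotProduct_mulVec, ← Matrix.mulVec_transpose]
      simp only [Sum.elim_comp_inl, Sum.elim_comp_inr, Matrix.add_mulVec,
        Matrix.smul_mulVec, Matrix.one_mulVec, dotProduct_sub,
        sumElim_dotProduct_sumElim, dotProduct_add,
        dotProduct_smul, smul_eq_mul, Pi.smul_apply]
      rw [hvKu, hvKKv]
      have hw2 : Kᵀ *ᵥ v = w := rfl
      rw [hw2]
      rw [dotProduct_comm w u]
      ring
    rw [key]
    have hbound := aux_dot_le K κ hK v
    have hsq : 0 ≤ (u + 2 • w) ⬝ᵥ (u + 2 • w) := aux_self_nonneg _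
    have hexp : (u + 2 • w) ⬝ᵥ (u + 2 • w)
        = u ⬝ᵥ u + 4 * (u ⬝ᵥ w) + 4 * (w ⬝ᵥ w) := by
      simp only [add_dotProduct, dotProduct_add, smul_dotProduct,
        dotProduct_smul, smul_eq_mul, dotProduct_comm w u]
      push_cast
      ring
    have hvv : 0 ≤ v ⬝ᵥ v := aux_self_nonneg _
    nlinarith [mul_nonneg hσ2.le hvv,
      mul_nonneg hσ2.le (mul_nonneg hvv (by nlinarith : (0:ℝ) ≤ κ ^ 2 - 1/2)),
      mul_le_mul_of_nonneg_left hbound hσ2.le,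
      mul_nonneg (by linarith : (0:ℝ) ≤ σ2 / 2) (hexp ▸ hsq)]
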